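/- Let x_1,...,x_n be homogeneous generators of a graded A_0-algebra A of positive degrees d_1,...,d_n, let D = d_1⋯d_n and m = 2nD. If a monomial X = x_1^{a_1}⋯x_n^{a_n} has degree pm with p ≥ 2, then there exist non-negative integers b_1,...,b_n with b_j·(D/d_j) ≤ a_j for all j and b_1 + ⋯ + b_n = 2n. -/

import Mathlib

/-- Any nonnegative integer vector with sum at least `k` dominates one with sum exactly `k`. -/
lemma exists_le_sum_eq {n : ℕ} : ∀ (s : ℕ) (c : Fin n → ℕ) (k : ℕ), ∑ j, c j = s → k ≤ s →
    ∃ b : Fin n → ℕ, (∀ j, b j ≤ c j) ∧ ∑ j, b j = k := by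
  intro s
  induction s with
  | zero =>
    intro c k hc hk
    exact ⟨c, fun j => le_rfl, by omega⟩
  | succ t ih =>
    intro c k hc hk
    rcases eq_or_lt_of_le hk with h | h
    · exact ⟨c, fun j => le_rfl, by omega⟩
    · have hpos : ∃ j, 0 < c j := by
        by_contra hi
        push_neg at hi
        have : ∑ j, c j = 0 := Finset.sum_eq_zero (fun j _ => by have := hi j; omega)
        omega
      obtain ⟨j0, hj0⟩ := hpos
      set c' : Fin n → ℕ := Function.update c j0 (c j0 - 1) with hc'
      have hsum' : ∑ j, c' j = t := by
        have h1 := Finset.sum_update_of_mem (Finset.mem_univ j0) c (c j0 - 1)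
        have h2 : ∑ j, c j = ∑ x ∈ Finset.univ \ {j0}, c x + c j0 :=
          Finset.sum_eq_sum_sdiff_singleton_add (Finset.mem_univ j0) c
        rw [hc', h1]
        omega
      obtain ⟨b, hb1, hb2⟩ := ih c' k hsum' (by omega)
      refine ⟨b, fun j => ?_, hb2⟩
      rcases eq_or_ne j j0 with rfl | hne
      · have := hb1 j
        simp [hc', Function.update_self] at this
        omega
      · have := hb1 j
        simpa [hc', Function.update_of_ne hne] using this

theorem exists_exponent_vector {n : ℕ} (d a : Fin n → ℕ) (hd : ∀ j, 1 ≤ d j)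
    (D m p : ℕ) (hD : D = ∏ j, d j) (hm : m = 2 * n * D) (hp : 2 ≤ p)
    (hsum : ∑ j, a j * d j = p * m) :
    ∃ b : Fin n → ℕ, (∀ j, b j * (D / d j) ≤ a j) ∧ ∑ j, b j = 2 * n := by
  rcases Nat.eq_zero_or_pos n with rfl | hn
  · exact ⟨fun j => 0, fun j => j.elim0, by simp⟩
  have hDpos : 0 < D := by
    rw [hD]; exact Finset.prod_pos (fun j _ => hd j)
  have hdvd : ∀ j, d j ∣ D := fun j => hD ▸ Finset.dvd_prod_of_mem d (Finset.mem_univ j)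
  have hq : ∀ j, d j * (D / d j) = D := fun j => Nat.mul_div_cancel' (hdvd j)
  have hqpos : ∀ j, 0 < D / d j := fun j =>
    Nat.div_pos (Nat.le_of_dvd hDpos (hdvd j)) (hd j)
  set c : Fin n → ℕ := fun j => a j / (D / d j) with hc
  -- key: a j * d j < (c j + 1) * D
  have key : ∀ j, a j * d j < (c j + 1) * D := by
    intro j
    have h1 : a j < (c j + 1) * (D / d j) := by
      have h := Nat.div_add_mod (a j) (D / d j)
      have h2 := Nat.mod_lt (a j) (hqpos j)
      have : (c j + 1) * (D / d j) = (D / d j) * (a j / (D / d j)) + (D / d j) := by simp only [hc]; ring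
      omega
    calc a j * d j < ((c j + 1) * (D / d j)) * d j :=
          (Nat.mul_lt_mul_right (hd j)).mpr h1
      _ = (c j + 1) * D := by rw [mul_assoc, mul_comm (D / d j) (d j), hq j]
  have hlt : p * m < (∑ j, c j + n) * D := by
    calc p * m = ∑ j, a j * d j := hsum.symm
      _ < ∑ j, (c j + 1) * D := by
          apply Finset.sum_lt_sum_of_nonempty
          · exact Finset.univ_nonempty_iff.mpr ⟨⟨0, hn⟩⟩
          · intro j _; exact key j
      _ = (∑ j, c j + n) * D := by
          rw [← Finset.sum_mul, Finset.sum_add_distrib]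
          simp
  have hge : 2 * n ≤ ∑ j, c j := by
    rw [hm] at hlt
    have h4 : 4 * n * D ≤ p * (2 * n * D) := by nlinarith
    have : 4 * n * D < (∑ j, c j + n) * D := lt_of_le_of_lt h4 hlt
    have h5 : 4 * n < ∑ j, c j + n := lt_of_mul_lt_mul_right this (Nat.zero_le D)
    omega
  obtain ⟨b, hb1, hb2⟩ := exists_le_sum_eq (∑ j, c j) c (2 * n) rfl hge
  refine ⟨b, fun j => ?_, hb2⟩
  calc b j * (D / d j) ≤ c j * (D / d j) := Nat.mul_le_mul_right _ (hb1 j)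
    _ ≤ a j := Nat.div_mul_le_self _ _
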